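/- arXiv:1506.01292 — 3 statements merged into one kernel-verified Lean document; each statement's English description precedes it below -/
import Mathlib

section
/- Quantitative convergence of Riesz spectral projections: let X be a complex Banach space, c ∈ ℂ, r > 0, and let T and S be bounded linear operators on X such that for every z ∈ ℂ with |z − c| = r both z·I − T and z·I − S are invertible, with ‖(z·I − T)⁻¹‖ ≤ M and ‖(z·I − S)⁻¹‖ ≤ M′ for constants M, M′ > 0. Let E(T) = (2πi)⁻¹ ∮_{|z−c|=r} (z·I − T)⁻¹ dz and E(S) = (2πi)⁻¹ ∮_{|z−c|=r} (z·I − S)⁻¹ dz be the associated Riesz projections. Then ‖E(T) − E(S)‖ ≤ r · M · M′ · ‖T − S‖. -/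
open ContinuousLinearMap

private lemma circleIntegrable_of_resolvent
    {X : Type*} [NormedAddCommGroup X] [NormedSpace ℂ X] [CompleteSpace X]
    (T : X →L[ℂ] X) (c : ℂ) (r : ℝ) (hr : 0 < r)
    (RT : ℂ → (X →L[ℂ] X))
    (hRT : ∀ z ∈ Metric.sphere c r,
      (z • ContinuousLinearMap.id ℂ X - T) ∘L RT z = ContinuousLinearMap.id ℂ X ∧
      RT z ∘L (z • ContinuousLinearMap.id ℂ X - T) = ContinuousLinearMap.id ℂ X) :
    CircleIntegrable RT c r := by
  have hmem : ∀ θ : ℝ, circleMap c r θ ∈ Metric.sphere c r := fun θ =>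
    circleMap_mem_sphere c hr.le θ
  have hunit : ∀ θ : ℝ, ∃ u : (X →L[ℂ] X)ˣ,
      (u : X →L[ℂ] X) = circleMap c r θ • (1 : X →L[ℂ] X) - T ∧
      RT (circleMap c r θ) = Ring.inverse ((u : X →L[ℂ] X)) := by
    intro θ
    obtain ⟨h1, h2⟩ := hRT _ (hmem θ)
    have hv1 : (circleMap c r θ • (1 : X →L[ℂ] X) - T) * RT (circleMap c r θ) = 1 := by
      simpa [ContinuousLinearMap.mul_def, ContinuousLinearMap.one_def] using h1
    have hv2 : RT (circleMap c r θ) * (circleMap c r θ • (1 : X →L[ℂ] X) - T) = 1 := by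
      simpa [ContinuousLinearMap.mul_def, ContinuousLinearMap.one_def] using h2
    exact ⟨⟨_, _, hv1, hv2⟩, rfl, (Ring.inverse_unit ⟨_, _, hv1, hv2⟩).symm⟩
  have hcont : Continuous fun θ : ℝ => RT (circleMap c r θ) := by
    have heq : (fun θ : ℝ => RT (circleMap c r θ)) =
        fun θ : ℝ => Ring.inverse (circleMap c r θ • (1 : X →L[ℂ] X) - T) := by
      funext θ
      obtain ⟨u, hu, hinv⟩ := hunit θ
      rw [hinv, hu]
    rw [heq]
    refine continuous_iff_continuousAt.2 fun θ => ?_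
    have hc : Continuous fun θ : ℝ => circleMap c r θ • (1 : X →L[ℂ] X) - T :=
      ((continuous_circleMap c r).smul continuous_const).sub continuous_const
    obtain ⟨u, hu, -⟩ := hunit θ
    exact ContinuousAt.comp (hu ▸ NormedRing.inverse_continuousAt u) hc.continuousAt
  exact hcont.intervalIntegrable 0 (2 * Real.pi)

/-- Quantitative convergence of Riesz spectral projections: if the circle
`|z - c| = r` lies in the resolvent sets of both `T` and `S`, with resolvents
bounded by `M` and `M'` respectively, then the associated Riesz projections
satisfy `‖E(T) - E(S)‖ ≤ r·M·M'·‖T - S‖`. -/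
theorem riesz_projection_diff_norm_le
    {X : Type*} [NormedAddCommGroup X] [NormedSpace ℂ X] [CompleteSpace X]
    (T S : X →L[ℂ] X) (c : ℂ) (r : ℝ) (hr : 0 < r)
    (M M' : ℝ) (hM : 0 < M) (hM' : 0 < M')
    (RT RS : ℂ → (X →L[ℂ] X))
    (hRT : ∀ z ∈ Metric.sphere c r,
      (z • ContinuousLinearMap.id ℂ X - T) ∘L RT z = ContinuousLinearMap.id ℂ X ∧
      RT z ∘L (z • ContinuousLinearMap.id ℂ X - T) = ContinuousLinearMap.id ℂ X)
    (hRTnorm : ∀ z ∈ Metric.sphere c r, ‖RT z‖ ≤ M)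
    (hRS : ∀ z ∈ Metric.sphere c r,
      (z • ContinuousLinearMap.id ℂ X - S) ∘L RS z = ContinuousLinearMap.id ℂ X ∧
      RS z ∘L (z • ContinuousLinearMap.id ℂ X - S) = ContinuousLinearMap.id ℂ X)
    (hRSnorm : ∀ z ∈ Metric.sphere c r, ‖RS z‖ ≤ M')
    (ET ES : X →L[ℂ] X)
    (hET : ET = (2 * Real.pi * Complex.I : ℂ)⁻¹ • ∮ z in C(c, r), RT z)
    (hES : ES = (2 * Real.pi * Complex.I : ℂ)⁻¹ • ∮ z in C(c, r), RS z) :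
    ‖ET - ES‖ ≤ r * M * M' * ‖T - S‖ := by
  -- resolvent identity on the sphere
  have key : ∀ z ∈ Metric.sphere c r, RT z - RS z = RT z * (T - S) * RS z := by
    intro z hz
    obtain ⟨h1, h2⟩ := hRT z hz
    obtain ⟨h3, h4⟩ := hRS z hz
    have h1' : (z • (1 : X →L[ℂ] X) - T) * RT z = 1 := by
      simpa [ContinuousLinearMap.mul_def, ContinuousLinearMap.one_def] using h1
    have h2' : RT z * (z • (1 : X →L[ℂ] X) - T) = 1 := by
      simpa [ContinuousLinearMap.mul_def, ContinuousLinearMap.one_def] using h2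
    have h3' : (z • (1 : X →L[ℂ] X) - S) * RS z = 1 := by
      simpa [ContinuousLinearMap.mul_def, ContinuousLinearMap.one_def] using h3
    have h4' : RS z * (z • (1 : X →L[ℂ] X) - S) = 1 := by
      simpa [ContinuousLinearMap.mul_def, ContinuousLinearMap.one_def] using h4
    have hTS : T - S = (z • (1 : X →L[ℂ] X) - S) - (z • (1 : X →L[ℂ] X) - T) := by abel
    calc RT z - RS z
        = RT z * ((z • (1 : X →L[ℂ] X) - S) * RS z)
          - (RT z * (z • (1 : X →L[ℂ] X) - T)) * RS z := by rw [h3', h2', mul_one, one_mul]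
      _ = RT z * (T - S) * RS z := by rw [hTS]; noncomm_ring
  have hbound : ∀ z ∈ Metric.sphere c r, ‖RT z - RS z‖ ≤ M * M' * ‖T - S‖ := by
    intro z hz
    rw [key z hz]
    calc ‖RT z * (T - S) * RS z‖ ≤ ‖RT z * (T - S)‖ * ‖RS z‖ := norm_mul_le _ _
      _ ≤ ‖RT z‖ * ‖T - S‖ * ‖RS z‖ :=
          mul_le_mul_of_nonneg_right (norm_mul_le _ _) (norm_nonneg _)
      _ ≤ M * ‖T - S‖ * M' := by
          gcongr
          exacts [hRTnorm z hz, hRSnorm z hz]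
      _ = M * M' * ‖T - S‖ := by ring
  have hcT : CircleIntegrable RT c r := circleIntegrable_of_resolvent T c r hr RT hRT
  have hcS : CircleIntegrable RS c r := circleIntegrable_of_resolvent S c r hr RS hRS
  have hsub : (∮ z in C(c, r), RT z) - (∮ z in C(c, r), RS z)
      = ∮ z in C(c, r), (RT z - RS z) := (circleIntegral.integral_sub hcT hcS).symm
  have hint : ‖∮ z in C(c, r), (RT z - RS z)‖ ≤ 2 * Real.pi * r * (M * M' * ‖T - S‖) :=
    circleIntegral.norm_integral_le_of_norm_le_const hr.le hbound
  have hnorm_inv : ‖(2 * Real.pi * Complex.I : ℂ)⁻¹‖ = (2 * Real.pi)⁻¹ := by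
    rw [norm_inv]
    simp [abs_of_pos Real.pi_pos, Real.pi_pos.le]
  calc ‖ET - ES‖
      = ‖(2 * Real.pi * Complex.I : ℂ)⁻¹ • ∮ z in C(c, r), (RT z - RS z)‖ := by
        rw [hET, hES, ← smul_sub, hsub]
    _ = (2 * Real.pi)⁻¹ * ‖∮ z in C(c, r), (RT z - RS z)‖ := by
        rw [norm_smul ((2 * Real.pi * Complex.I : ℂ)⁻¹) (∮ z in C(c, r), (RT z - RS z)), hnorm_inv]
    _ ≤ (2 * Real.pi)⁻¹ * (2 * Real.pi * r * (M * M' * ‖T - S‖)) := by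
        gcongr
    _ = r * M * M' * ‖T - S‖ := by
        field_simp
end

section
/- The Riesz spectral projection is idempotent: let X be a complex Banach space, T a bounded linear operator on X, and Λ = {z ∈ ℂ : |z − c| = r} a circle contained in the resolvent set of T. Then the Riesz projection E = (2πi)⁻¹ ∮_Λ (z·I − T)⁻¹ dz satisfies E ∘ E = E. -/
open ContinuousLinearMap

open Metric Real Complex MeasureTheory Set in
/-- Auxiliary geometric fact: a closed annulus around the sphere of radius `r`
is contained in the `δ`-thickening of the sphere. -/
private lemma riesz_aux_annulus {c : ℂ} {r δ : ℝ} (hr : 0 < r) (hδ : 0 < δ) :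
    closedBall c (r + min (δ/2) (r/2)) \ ball c (r - min (δ/2) (r/2)) ⊆
      Metric.thickening δ (sphere c r) := by
  set ε := min (δ/2) (r/2) with hε
  have hε0 : 0 < ε := lt_min (by linarith) (by linarith)
  have hεr : ε ≤ r / 2 := min_le_right _ _
  have hεδ : ε ≤ δ / 2 := min_le_left _ _
  rintro z ⟨hz1, hz2⟩
  rw [mem_closedBall] at hz1
  rw [mem_ball, not_lt] at hz2
  set d := dist z c with hd
  have hd0 : 0 < d := lt_of_lt_of_le (by linarith) hz2
  have hzc : z ≠ c := fun h => by simp [hd, h] at hd0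
  set p : ℂ := c + (r / d : ℝ) • (z - c) with hp
  have hnorm : ‖z - c‖ = d := by rw [hd, dist_eq_norm]
  have hps : p ∈ sphere c r := by
    rw [mem_sphere, dist_eq_norm, hp, add_sub_cancel_left, norm_smul, hnorm,
      Real.norm_eq_abs]
    have h1 : |r / d| = r / d := abs_of_nonneg (by positivity)
    rw [h1]
    field_simp
  have hdist : dist z p = |d - r| := by
    rw [dist_eq_norm, hp]
    have h2 : z - (c + (r / d : ℝ) • (z - c)) = ((1 : ℝ) - r / d) • (z - c) := by
      rw [sub_smul, one_smul]; abel
    have h3 : (1 : ℝ) - r / d = (d - r) / d := by field_simp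
    rw [h2, h3, norm_smul, hnorm, Real.norm_eq_abs, abs_div, abs_of_pos hd0,
      div_mul_cancel₀ _ hd0.ne']
  refine Metric.mem_thickening_iff.mpr ⟨p, hps, ?_⟩
  rw [hdist, abs_sub_lt_iff]
  constructor <;> linarith

open Metric Real Complex MeasureTheory Set in
private lemma riesz_aux_clm_comm {E F : Type*} [NormedAddCommGroup E] [NormedSpace ℂ E]
    [NormedAddCommGroup F] [NormedSpace ℂ F] [CompleteSpace E] [CompleteSpace F]
    (L : E →L[ℂ] F) {f : ℂ → E} {c : ℂ} {R : ℝ} (hf : CircleIntegrable f c R) :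
    (∮ z in C(c, R), L (f z)) = L (∮ z in C(c, R), f z) := by
  rw [circleIntegral, circleIntegral, ← L.intervalIntegral_comp_comm hf.out]
  congr 1
  ext θ
  rw [L.map_smul]

open Metric Real Complex MeasureTheory Set in
/-- The resolvent identity. -/
private lemma riesz_aux_resolvent_id {A : Type*} [NormedRing A] [NormedAlgebra ℂ A]
    (a : A) {z w : ℂ} (hz : z ∈ resolventSet ℂ a) (hw : w ∈ resolventSet ℂ a) :
    resolvent a w - resolvent a z = (z - w) • (resolvent a w * resolvent a z) := by
  have k1 : (algebraMap ℂ A z - a) * resolvent a z = 1 := Ring.mul_inverse_cancel _ hz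
  have k2 : resolvent a w * (algebraMap ℂ A w - a) = 1 := Ring.inverse_mul_cancel _ hw
  have key : resolvent a w - resolvent a z
      = resolvent a w * ((algebraMap ℂ A z - a) - (algebraMap ℂ A w - a)) * resolvent a z := by
    calc resolvent a w - resolvent a z
        = resolvent a w * ((algebraMap ℂ A z - a) * resolvent a z)
          - (resolvent a w * (algebraMap ℂ A w - a)) * resolvent a z := by
          rw [k1, k2, mul_one, one_mul]
      _ = resolvent a w * ((algebraMap ℂ A z - a) - (algebraMap ℂ A w - a)) * resolvent a z := by
          noncomm_ring
  rw [key]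
  have : (algebraMap ℂ A z - a) - (algebraMap ℂ A w - a) = (z - w) • (1 : A) := by
    rw [sub_sub_sub_cancel_right, ← map_sub, Algebra.algebraMap_eq_smul_one]
  rw [this, mul_smul_comm, mul_one, smul_mul_assoc]

open Metric Real Complex MeasureTheory Set in
/-- Key computation: the square of the circle integral of the resolvent. -/
private lemma riesz_aux_key {A : Type*} [NormedRing A] [NormedAlgebra ℂ A] [CompleteSpace A]
    (a : A) (c : ℂ) (r : ℝ) (hr : 0 < r) (hs : sphere c r ⊆ resolventSet ℂ a) :
    (∮ z in C(c, r), resolvent a z) * (∮ z in C(c, r), resolvent a z)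
      = (2 * π * Complex.I) • ∮ z in C(c, r), resolvent a z := by
  -- differentiability and continuity of the resolvent
  have hρd : ∀ z ∈ resolventSet ℂ a, DifferentiableAt ℂ (resolvent a) z := fun z hz =>
    (spectrum.hasDerivAt_resolvent hz).differentiableAt
  have hρc : ∀ s : Set ℂ, s ⊆ resolventSet ℂ a → ContinuousOn (resolvent a) s := fun s hsub z hz =>
    ((hρd z (hsub hz)).continuousAt).continuousWithinAt
  -- choose an annulus inside the resolvent set
  obtain ⟨δ, hδ, hthick⟩ := (isCompact_sphere c r).exists_thickening_subset_open
    (spectrum.isOpen_resolventSet a) hs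
  set ε := min (δ/2) (r/2) with hε
  have hε0 : 0 < ε := lt_min (by linarith) (by linarith)
  have hεr : ε ≤ r / 2 := min_le_right _ _
  set r₁ := r - ε with hr₁def
  set r₂ := r + ε with hr₂def
  have hr₁ : 0 < r₁ := by simp only [hr₁def]; linarith
  have h1r : r₁ < r := by simp only [hr₁def]; linarith
  have hrr2 : r < r₂ := by simp only [hr₂def]; linarith
  have h12 : r₁ < r₂ := h1r.trans hrr2
  have hann : closedBall c r₂ \ ball c r₁ ⊆ resolventSet ℂ a :=
    (riesz_aux_annulus hr hδ).trans hthick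
  have hmem : ∀ {R' : ℝ}, r₁ ≤ R' → R' ≤ r₂ → sphere c R' ⊆ resolventSet ℂ a := by
    intro R' h1 h2 z hz
    rw [mem_sphere] at hz
    exact hann ⟨by rw [mem_closedBall, hz]; exact h2, by rw [mem_ball, hz, not_lt]; exact h1⟩
  have hs1 : sphere c r₁ ⊆ resolventSet ℂ a := hmem le_rfl h12.le
  have hs2 : sphere c r₂ ⊆ resolventSet ℂ a := hmem h12.le le_rfl
  have hint : ∀ {R' : ℝ}, 0 < R' → sphere c R' ⊆ resolventSet ℂ a →
      CircleIntegrable (resolvent a) c R' := fun h hsub =>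
    ContinuousOn.circleIntegrable h.le (hρc _ hsub)
  have hint1 : CircleIntegrable (resolvent a) c r₁ := hint hr₁ hs1
  have hint2 : CircleIntegrable (resolvent a) c r₂ := hint (hr₁.trans h12) hs2
  -- deformation of contours
  have hsub1 : closedBall c r \ ball c r₁ ⊆ resolventSet ℂ a := by
    rintro z ⟨h1, h2⟩
    exact hann ⟨closedBall_subset_closedBall (by simp only [hr₂def]; linarith) h1, h2⟩
  have hsub2 : closedBall c r₂ \ ball c r ⊆ resolventSet ℂ a := by
    rintro z ⟨h1, h2⟩
    exact hann ⟨h1, fun h => h2 (ball_subset_ball h1r.le h)⟩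
  have hdef1 : (∮ z in C(c, r), resolvent a z) = ∮ z in C(c, r₁), resolvent a z := by
    refine circleIntegral_eq_of_differentiable_on_annulus_off_countable hr₁ h1r.le
      countable_empty (hρc _ hsub1) fun z hz => hρd _ (hsub1 ⟨ball_subset_closedBall hz.1.1,
        fun h => hz.1.2 (ball_subset_closedBall h)⟩)
  have hdef2 : (∮ z in C(c, r₂), resolvent a z) = ∮ z in C(c, r), resolvent a z := by
    refine circleIntegral_eq_of_differentiable_on_annulus_off_countable hr hrr2.le
      countable_empty (hρc _ hsub2) fun z hz => hρd _ (hsub2 ⟨ball_subset_closedBall hz.1.1,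
        fun h => hz.1.2 (ball_subset_closedBall h)⟩)
  set ρ : ℂ → A := resolvent a with hρ
  set I₁ := ∮ z in C(c, r₁), ρ z with hI₁
  set I₂ := ∮ z in C(c, r₂), ρ z with hI₂
  have hr₂pos : 0 < r₂ := hr₁.trans h12
  have hne12 : ∀ {w z : ℂ}, w ∈ sphere c r₁ → z ∈ sphere c r₂ → z - w ≠ 0 := by
    intro w z hw hz
    rw [mem_sphere] at hw hz
    rw [sub_ne_zero]
    intro h
    rw [h, hw] at hz
    exact (ne_of_lt h12) hz
  set g : ℂ → A := fun w => ∮ z in C(c, r₂), (z - w)⁻¹ • ρ z with hg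
  have hstep : ∀ w ∈ sphere c r₁, ρ w * I₂ = (2 * π * Complex.I) • ρ w - g w := by
    intro w hw
    have hwball : w ∈ ball c r₂ := by rw [mem_ball, mem_sphere.mp hw]; exact h12
    have e1 : ρ w * I₂ = ∮ z in C(c, r₂), ρ w * ρ z := by
      have h := riesz_aux_clm_comm ((ContinuousLinearMap.mul ℂ A) (ρ w)) hint2
      simpa using h.symm
    have e2 : (∮ z in C(c, r₂), ρ w * ρ z)
        = ∮ z in C(c, r₂), ((z - w)⁻¹ • ρ w - (z - w)⁻¹ • ρ z) := by
      refine circleIntegral.integral_congr hr₂pos.le fun z hz => ?_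
      have hzw := hne12 hw hz
      have hid := riesz_aux_resolvent_id a (hs2 hz) (hs1 hw)
      rw [← smul_sub, hid, inv_smul_smul₀ hzw]
    have hc2 : ContinuousOn (fun z => (z - w)⁻¹) (sphere c r₂) :=
      (continuousOn_id.sub continuousOn_const).inv₀ fun z hz => hne12 hw hz
    have hi1 : CircleIntegrable (fun z => (z - w)⁻¹ • ρ w) c r₂ :=
      (hc2.smul continuousOn_const).circleIntegrable hr₂pos.le
    have hi2 : CircleIntegrable (fun z => (z - w)⁻¹ • ρ z) c r₂ :=
      (hc2.smul (hρc _ hs2)).circleIntegrable hr₂pos.le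
    rw [e1, e2, circleIntegral.integral_sub hi1 hi2, circleIntegral.integral_smul_const,
      circleIntegral.integral_sub_inv_of_mem_ball hwball]
  have hcont_h : ContinuousOn (fun w => (2 * π * Complex.I) • ρ w - ρ w * I₂) (sphere c r₁) :=
    ((hρc _ hs1).const_smul _).sub ((hρc _ hs1).mul continuousOn_const)
  have hgs : CircleIntegrable g c r₁ := by
    have h := hcont_h.circleIntegrable hr₁.le
    have heq : (fun θ => g (circleMap c r₁ θ))
        = fun θ => (2 * π * Complex.I) • ρ (circleMap c r₁ θ) - ρ (circleMap c r₁ θ) * I₂ :=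
      funext fun θ => by
        have h' := hstep _ (circleMap_mem_sphere c hr₁.le θ)
        rw [eq_sub_iff_add_eq] at h' ⊢
        rw [add_comm]
        exact h'
    show IntervalIntegrable _ volume 0 (2 * π)
    rw [heq]
    exact h
  have hfub : (∮ w in C(c, r₁), g w) = 0 := by
    have hzero : ∀ φ : ℝ, (∮ w in C(c, r₁), (circleMap c r₂ φ - w)⁻¹) = 0 := by
      intro φ
      have hout : circleMap c r₂ φ ∉ closedBall c r₁ := by
        rw [mem_closedBall, mem_sphere.mp (circleMap_mem_sphere c hr₂pos.le φ), not_le]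
        exact h12
      refine circleIntegral_eq_zero_of_differentiable_on_off_countable hr₁.le countable_empty
        ((continuousOn_const.sub continuousOn_id).inv₀ fun w hw =>
          sub_ne_zero.mpr fun h => hout ((show circleMap c r₂ φ = w from h) ▸ hw)) fun w hw => ?_
      exact ((differentiable_const _).sub differentiable_id).differentiableAt.inv
        (sub_ne_zero.mpr fun h => hout ((show circleMap c r₂ φ = w from h) ▸ ball_subset_closedBall hw.1))
    set F : ℝ → ℝ → A := fun θ φ =>
      ((circleMap 0 r₁ θ * Complex.I) * (circleMap c r₂ φ - circleMap c r₁ θ)⁻¹) •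
        ((circleMap 0 r₂ φ * Complex.I) • ρ (circleMap c r₂ φ)) with hF
    have hne : ∀ θ φ : ℝ, circleMap c r₂ φ - circleMap c r₁ θ ≠ 0 := fun θ φ =>
      hne12 (circleMap_mem_sphere c hr₁.le θ) (circleMap_mem_sphere c hr₂pos.le φ)
    have hρz : Continuous fun φ : ℝ => ρ (circleMap c r₂ φ) := by
      rw [continuous_iff_continuousAt]
      exact fun φ => ((hρd _ (hs2 (circleMap_mem_sphere c hr₂pos.le φ))).continuousAt).comp
        (continuous_circleMap c r₂).continuousAt
    have hFcont : Continuous (Function.uncurry F) := by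
      refine Continuous.smul (Continuous.mul ?_ ?_) (Continuous.smul ?_ ?_)
      · exact ((continuous_circleMap 0 r₁).comp continuous_fst).mul continuous_const
      · exact Continuous.inv₀
          (((continuous_circleMap c r₂).comp continuous_snd).sub
            ((continuous_circleMap c r₁).comp continuous_fst)) fun p => hne p.1 p.2
      · exact ((continuous_circleMap 0 r₂).comp continuous_snd).mul continuous_const
      · exact hρz.comp continuous_snd
    have hLHS : (∮ w in C(c, r₁), g w) = ∫ θ in (0:ℝ)..(2*π), ∫ φ in (0:ℝ)..(2*π), F θ φ := by
      rw [circleIntegral]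
      refine intervalIntegral.integral_congr fun θ _ => ?_
      simp only [hg, circleIntegral, deriv_circleMap]
      rw [← intervalIntegral.integral_smul]
      refine intervalIntegral.integral_congr fun φ _ => ?_
      simp only [hF]
      rw [smul_smul, smul_smul, smul_smul]
      congr 1
      ring
    have hswap : (∫ θ in (0:ℝ)..(2*π), ∫ φ in (0:ℝ)..(2*π), F θ φ)
        = ∫ φ in (0:ℝ)..(2*π), ∫ θ in (0:ℝ)..(2*π), F θ φ := by
      have h2π : (0:ℝ) ≤ 2*π := by positivity
      simp only [intervalIntegral.integral_of_le h2π]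
      refine MeasureTheory.integral_integral_swap ?_
      rw [Measure.prod_restrict]
      have hI : IntegrableOn (Function.uncurry F) (Icc 0 (2*π) ×ˢ Icc 0 (2*π))
          (volume.prod volume) := by
        rw [← Measure.volume_eq_prod]
        exact hFcont.continuousOn.integrableOn_compact (isCompact_Icc.prod isCompact_Icc)
      exact hI.mono_set (prod_mono Ioc_subset_Icc_self Ioc_subset_Icc_self)
    have hinner : ∀ φ : ℝ, (∫ θ in (0:ℝ)..(2*π), F θ φ) = 0 := by
      intro φ
      have h : (∫ θ in (0:ℝ)..(2*π), F θ φ)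
          = (∮ w in C(c, r₁), (circleMap c r₂ φ - w)⁻¹) •
            ((circleMap 0 r₂ φ * Complex.I) • ρ (circleMap c r₂ φ)) := by
        rw [circleIntegral, ← intervalIntegral.integral_smul_const]
        refine intervalIntegral.integral_congr fun θ _ => ?_
        simp only [hF, deriv_circleMap, smul_eq_mul]
      rw [h, hzero φ, zero_smul]
    rw [hLHS, hswap]
    simp only [hinner, intervalIntegral.integral_zero]
  have hsmul_int : CircleIntegrable (fun w => (2 * π * Complex.I) • ρ w) c r₁ :=
    ((hρc _ hs1).const_smul _).circleIntegrable hr₁.le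
  have main : I₁ * I₂ = (2 * π * Complex.I) • I₁ := by
    have e0 : I₁ * I₂ = ∮ w in C(c, r₁), ρ w * I₂ := by
      have h := riesz_aux_clm_comm ((ContinuousLinearMap.mul ℂ A).flip I₂) hint1
      simpa using h.symm
    rw [e0, circleIntegral.integral_congr hr₁.le fun w hw => hstep w hw,
      circleIntegral.integral_sub hsmul_int hgs, hfub, sub_zero,
      circleIntegral.integral_smul]
  nth_rewrite 1 [hdef1]
  nth_rewrite 1 [← hdef2]
  rw [hdef1]
  exact main

/-- The Riesz spectral projection associated with a circle contained in the
resolvent set of `T` is idempotent: `E ∘ E = E`. -/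
theorem riesz_projection_idempotent
    {X : Type*} [NormedAddCommGroup X] [NormedSpace ℂ X] [CompleteSpace X]
    (T : X →L[ℂ] X) (c : ℂ) (r : ℝ) (hr : 0 < r)
    (RT : ℂ → (X →L[ℂ] X))
    (hRT : ∀ z ∈ Metric.sphere c r,
      (z • ContinuousLinearMap.id ℂ X - T) ∘L RT z = ContinuousLinearMap.id ℂ X ∧
      RT z ∘L (z • ContinuousLinearMap.id ℂ X - T) = ContinuousLinearMap.id ℂ X)
    (E : X →L[ℂ] X)
    (hE : E = (2 * Real.pi * Complex.I : ℂ)⁻¹ • ∮ z in C(c, r), RT z) :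
    E ∘L E = E := by
  have key : ∀ z : ℂ, algebraMap ℂ (X →L[ℂ] X) z - T = z • ContinuousLinearMap.id ℂ X - T := by
    intro z
    rw [Algebra.algebraMap_eq_smul_one, ContinuousLinearMap.one_def]
  have hunit : ∀ z ∈ Metric.sphere c r, IsUnit (algebraMap ℂ (X →L[ℂ] X) z - T) := by
    intro z hz
    obtain ⟨h1, h2⟩ := hRT z hz
    refine isUnit_iff_exists.mpr ⟨RT z, ?_, ?_⟩
    · rw [key, ContinuousLinearMap.mul_def, ContinuousLinearMap.one_def]
      exact h1
    · rw [key, ContinuousLinearMap.mul_def, ContinuousLinearMap.one_def]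
      exact h2
  have hsub : Metric.sphere c r ⊆ resolventSet ℂ T := fun z hz =>
    spectrum.mem_resolventSet_iff.mpr (hunit z hz)
  have hres : ∀ z ∈ Metric.sphere c r, RT z = resolvent T z := by
    intro z hz
    obtain ⟨h1, h2⟩ := hRT z hz
    have h1' : (algebraMap ℂ (X →L[ℂ] X) z - T) * RT z = 1 := by
      rw [key, ContinuousLinearMap.mul_def, ContinuousLinearMap.one_def]
      exact h1
    have h2' : RT z * (algebraMap ℂ (X →L[ℂ] X) z - T) = 1 := by
      rw [key, ContinuousLinearMap.mul_def, ContinuousLinearMap.one_def]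
      exact h2
    have : resolvent T z = Ring.inverse (algebraMap ℂ (X →L[ℂ] X) z - T) := rfl
    rw [this, Ring.inverse_unit ⟨algebraMap ℂ (X →L[ℂ] X) z - T, RT z, h1', h2'⟩]
    rfl
  have hEint : (∮ z in C(c, r), RT z) = ∮ z in C(c, r), resolvent T z :=
    circleIntegral.integral_congr hr.le fun z hz => hres z hz
  have hkey := riesz_aux_key T c r hr hsub
  rw [hE, hEint]
  rw [← ContinuousLinearMap.mul_def]
  calc ((2 * Real.pi * Complex.I : ℂ)⁻¹ • ∮ z in C(c, r), resolvent T z) *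
        ((2 * Real.pi * Complex.I : ℂ)⁻¹ • ∮ z in C(c, r), resolvent T z)
      = (2 * Real.pi * Complex.I : ℂ)⁻¹ • ((2 * Real.pi * Complex.I : ℂ)⁻¹ •
          ((∮ z in C(c, r), resolvent T z) * ∮ z in C(c, r), resolvent T z)) := by
        rw [smul_mul_assoc, mul_smul_comm]
    _ = (2 * Real.pi * Complex.I : ℂ)⁻¹ • ((2 * Real.pi * Complex.I : ℂ)⁻¹ •
          ((2 * Real.pi * Complex.I : ℂ) • ∮ z in C(c, r), resolvent T z)) := by
        rw [hkey]
    _ = (2 * Real.pi * Complex.I : ℂ)⁻¹ • ∮ z in C(c, r), resolvent T z := by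
        rw [inv_smul_smul₀ Complex.two_pi_I_ne_zero]
end

section
/- Completeness of the spectrum for self-adjoint operators: let H be a nontrivial complex Hilbert space and let T and S be self-adjoint bounded linear operators on H. Then for every z ∈ σ(T) there exists w ∈ σ(S) with |z − w| ≤ ‖T − S‖; that is, dist(z, σ(S)) ≤ ‖T − S‖ for every z in the spectrum of T. (Applied with S = T_h and ‖T − T_h‖ → 0, every point of σ(T) is approximated by points of σ(T_h).) -/
open scoped ComplexInnerProductSpace

/-- Completeness of the spectrum for self-adjoint operators: each point of the
spectrum of `T` is within `‖T - S‖` of the spectrum of `S`. -/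
theorem spectrum_dist_le_of_selfAdjoint
    {H : Type*} [NormedAddCommGroup H] [InnerProductSpace ℂ H] [CompleteSpace H]
    [Nontrivial H]
    (T S : H →L[ℂ] H)
    (hT : ∀ f g : H, ⟪T f, g⟫ = ⟪f, T g⟫)
    (hS : ∀ f g : H, ⟪S f, g⟫ = ⟪f, S g⟫) :
    ∀ z ∈ spectrum ℂ T, ∃ w ∈ spectrum ℂ S, ‖z - w‖ ≤ ‖T - S‖ := by
  intro z hz
  have hS' : IsSelfAdjoint S := LinearMap.IsSymmetric.isSelfAdjoint (fun f g => hS f g)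
  have hne : (spectrum ℂ S).Nonempty := spectrum.nonempty S
  have hcpt : IsCompact (spectrum ℂ S) := spectrum.isCompact S
  obtain ⟨w, hw, hmin⟩ := hcpt.exists_isMinOn hne
    ((continuous_const.sub continuous_id).norm.continuousOn)
  refine ⟨w, hw, ?_⟩
  by_contra hlt
  push_neg at hlt
  set d := ‖z - w‖ with hd
  have hd0 : 0 < d := lt_of_le_of_lt (norm_nonneg _) hlt
  have hmin' : ∀ w' ∈ spectrum ℂ S, d ≤ ‖z - w'‖ := fun w' hw' => hmin hw'
  have hzS : z ∉ spectrum ℂ S := by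
    intro h
    have := hmin' z h
    simp only [sub_self, norm_zero] at this
    linarith
  have hunit : IsUnit (algebraMap ℂ (H →L[ℂ] H) z - S) := spectrum.notMem_iff.mp hzS
  obtain ⟨u, hu⟩ := hunit
  -- normality of u
  have hcomm : Commute (star (u : H →L[ℂ] H)) (u : H →L[ℂ] H) := by
    rw [hu, star_sub, ← algebraMap_star_comm, hS'.star_eq]
    unfold Commute SemiconjBy
    simp only [sub_mul, mul_sub, Algebra.commutes, ← map_mul, mul_comm]
    abel
  -- the unit whose coe is star ↑u
  let v : (H →L[ℂ] H)ˣ :=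
    ⟨star (u : H →L[ℂ] H), star ((u⁻¹ : (H →L[ℂ] H)ˣ) : H →L[ℂ] H),
      by rw [← star_mul, u.inv_mul, star_one],
      by rw [← star_mul, u.mul_inv, star_one]⟩
  have hnormal : IsStarNormal ((u⁻¹ : (H →L[ℂ] H)ˣ) : H →L[ℂ] H) := by
    constructor
    have hcv : Commute (v : H →L[ℂ] H) (u : H →L[ℂ] H) := hcomm
    have := (hcv.units_inv_left.units_inv_right : Commute
      ((v⁻¹ : (H →L[ℂ] H)ˣ) : H →L[ℂ] H) ((u⁻¹ : (H →L[ℂ] H)ˣ) : H →L[ℂ] H))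
    exact this
  -- norm bound on the inverse
  have hbound : ∀ k ∈ spectrum ℂ ((u⁻¹ : (H →L[ℂ] H)ˣ) : H →L[ℂ] H), ‖k‖ ≤ d⁻¹ := by
    intro k hk
    rw [← spectrum.map_inv, Set.mem_inv] at hk
    rw [hu, ← spectrum.singleton_sub_eq] at hk
    obtain ⟨x, hx, y, hy, hxy⟩ := hk
    rw [Set.mem_singleton_iff] at hx
    subst hx
    have h1 : d ≤ ‖k⁻¹‖ := by rw [← hxy]; exact hmin' y hy
    have hk0 : k ≠ 0 := by
      intro h0
      rw [h0] at h1
      simp at h1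
      linarith
    rw [norm_inv] at h1
    rw [← inv_inv ‖k‖]
    exact inv_anti₀ hd0 h1
  have hnorm : ‖((u⁻¹ : (H →L[ℂ] H)ˣ) : H →L[ℂ] H)‖ ≤ d⁻¹ := by
    haveI := hnormal
    have h1 : spectralRadius ℂ ((u⁻¹ : (H →L[ℂ] H)ˣ) : H →L[ℂ] H)
        = ‖((u⁻¹ : (H →L[ℂ] H)ˣ) : H →L[ℂ] H)‖₊ :=
      IsStarNormal.spectralRadius_eq_nnnorm _
    have h2 : spectralRadius ℂ ((u⁻¹ : (H →L[ℂ] H)ˣ) : H →L[ℂ] H)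
        ≤ ENNReal.ofReal d⁻¹ := by
      refine iSup₂_le fun k hk => ?_
      rw [← ENNReal.ofReal_coe_nnreal, coe_nnnorm]
      exact ENNReal.ofReal_le_ofReal (hbound k hk)
    rw [h1] at h2
    have := ENNReal.toReal_mono (by simp) h2
    simpa [ENNReal.toReal_ofReal (le_of_lt (inv_pos.mpr hd0))] using this
  -- conclude
  have hsmall : ‖((u⁻¹ : (H →L[ℂ] H)ˣ) : H →L[ℂ] H) * (T - S)‖ < 1 := by
    calc ‖((u⁻¹ : (H →L[ℂ] H)ˣ) : H →L[ℂ] H) * (T - S)‖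
        ≤ ‖((u⁻¹ : (H →L[ℂ] H)ˣ) : H →L[ℂ] H)‖ * ‖T - S‖ := norm_mul_le _ _
      _ ≤ d⁻¹ * ‖T - S‖ := by gcongr
      _ < d⁻¹ * d := by gcongr
      _ = 1 := inv_mul_cancel₀ (ne_of_gt hd0)
  have hfac : algebraMap ℂ (H →L[ℂ] H) z - T
      = (u : H →L[ℂ] H) * (1 - ((u⁻¹ : (H →L[ℂ] H)ˣ) : H →L[ℂ] H) * (T - S)) := by
    rw [mul_sub, mul_one, ← mul_assoc, u.mul_inv, one_mul, hu]
    abel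
  have : IsUnit (algebraMap ℂ (H →L[ℂ] H) z - T) := by
    rw [hfac]
    exact u.isUnit.mul (Units.oneSub _ hsmall).isUnit
  exact spectrum.mem_iff.mp hz this
end
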